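/- Let q be a prime power and a ≥ b ≥ 1 integers. Set ℓ = q^a, m = q^b − 1 with m > 1, and t = ℓ mod m. Regard F_{q^{m+1}} and F_{q^t} as subfields of F_{q^ℓ} (note m + 1 = q^b and t = q^{a mod b} both divide ℓ). Define σ : F_{q^ℓ} → F_{q^ℓ} by σ(x) = ∑_{i=0}^{m} x^{q^i}, and let W = {x ∈ F_{q^{m+1}} : σ(x) = 0} be the kernel in F_{q^{m+1}} of the trace from F_{q^{m+1}} to F_q. Then: (i) W is an F_q-subspace of F_{q^ℓ} of dimension m with ∏_{w ∈ W \ {0}} w = 1; (ii) F_{q^t} ⊆ W and the image of the ⌈(ℓ − m)/m⌉-fold iterate of σ equals F_{q^t}, so im(σ^{∘⌈(ℓ−m)/m⌉}) ∩ W has F_q-dimension at least t; (iii) W is contained in the image of the ⌊(ℓ − m)/m⌋-fold iterate of σ. -/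

import Mathlib

open scoped Classical
open Polynomial Module

section aux
variable {K F : Type*} [Field K] [AddCommGroup F] [Module K F] [FiniteDimensional K F]

omit [FiniteDimensional K F] in
lemma aux_ker_mono (T : F →ₗ[K] F) {i j : ℕ} (h : i ≤ j) :
    LinearMap.ker (T ^ i) ≤ LinearMap.ker (T ^ j) := by
  intro x hx
  have hT : T ^ j = T ^ (j - i) * T ^ i := by rw [← pow_add]; congr 1; omega
  simp only [LinearMap.mem_ker] at hx ⊢
  rw [hT, Module.End.mul_apply, hx, map_zero]

lemma aux_ker_succ (T : F →ₗ[K] F) (j : ℕ) :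
    finrank K (LinearMap.ker (T ^ (j + 1))) ≤
      finrank K (LinearMap.ker (T ^ j)) + finrank K (LinearMap.ker T) := by
  have hmem : ∀ x ∈ LinearMap.ker (T ^ (j + 1)), T x ∈ LinearMap.ker (T ^ j) := by
    intro x hx
    simp only [LinearMap.mem_ker] at hx ⊢
    rw [← Module.End.mul_apply, ← pow_succ]
    exact hx
  set g := T.restrict hmem with hg
  have h1 := g.finrank_range_add_finrank_ker
  have h2 : finrank K (LinearMap.range g) ≤ finrank K (LinearMap.ker (T ^ j)) :=
    (LinearMap.range g).finrank_le
  have h3 : finrank K (LinearMap.ker g) ≤ finrank K (LinearMap.ker T) := by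
    have hmem2 : ∀ x : LinearMap.ker g,
        ((LinearMap.ker (T ^ (j + 1))).subtype.comp (LinearMap.ker g).subtype) x
          ∈ LinearMap.ker T := by
      intro x
      exact LinearMap.mem_ker.mpr (congrArg Subtype.val x.2)
    set f : LinearMap.ker g →ₗ[K] LinearMap.ker T :=
      LinearMap.codRestrict _ _ hmem2 with hf
    have hinj : Function.Injective f := by
      intro x y hxy
      have := congrArg Subtype.val hxy
      simp only [hf, LinearMap.codRestrict_apply, LinearMap.comp_apply,
        Submodule.coe_subtype] at this
      ext
      exact congrArg Subtype.val (Subtype.val_injective this)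
    exact LinearMap.finrank_le_finrank_of_injective hinj
  omega

lemma aux_ker_pow_le (T : F →ₗ[K] F) (h1 : finrank K (LinearMap.ker T) ≤ 1) (j : ℕ) :
    finrank K (LinearMap.ker (T ^ j)) ≤ j := by
  induction j with
  | zero => simp [LinearMap.ker_id, pow_zero, Module.End.one_eq_id]
  | succ n ih => have := aux_ker_succ T n; omega

lemma aux_ker_pow_eq (T : F →ₗ[K] F) (h1 : finrank K (LinearMap.ker T) ≤ 1) {ℓ : ℕ}
    (hF : finrank K F = ℓ) (hT : T ^ ℓ = 0) {j : ℕ} (hj : j ≤ ℓ) :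
    finrank K (LinearMap.ker (T ^ j)) = j := by
  have hchain : ∀ k i : ℕ, finrank K (LinearMap.ker (T ^ (i + k)))
      ≤ finrank K (LinearMap.ker (T ^ i)) + k := by
    intro k
    induction k with
    | zero => intro i; simp
    | succ n ih =>
      intro i
      have h2 := aux_ker_succ T (i + n)
      have := ih i
      have h3 : i + (n + 1) = i + n + 1 := by omega
      rw [h3]
      omega
  have htop : finrank K (LinearMap.ker (T ^ ℓ)) = ℓ := by
    rw [hT, LinearMap.ker_zero, finrank_top, hF]
  have h4 := hchain (ℓ - j) j
  rw [show j + (ℓ - j) = ℓ by omega, htop] at h4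
  have h5 := aux_ker_pow_le T h1 j
  omega

lemma aux_range_pow_eq (T : F →ₗ[K] F) (h1 : finrank K (LinearMap.ker T) ≤ 1) {ℓ : ℕ}
    (hF : finrank K F = ℓ) (hT : T ^ ℓ = 0) {j : ℕ} (hj : j ≤ ℓ) :
    LinearMap.range (T ^ j) = LinearMap.ker (T ^ (ℓ - j)) := by
  have hle : LinearMap.range (T ^ j) ≤ LinearMap.ker (T ^ (ℓ - j)) := by
    rintro x ⟨y, rfl⟩
    simp only [LinearMap.mem_ker]
    rw [← Module.End.mul_apply, ← pow_add, show ℓ - j + j = ℓ by omega, hT]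
    rfl
  refine Submodule.eq_of_le_of_finrank_le hle ?_
  have h2 := (T ^ j).finrank_range_add_finrank_ker
  rw [hF, aux_ker_pow_eq T h1 hF hT hj] at h2
  rw [aux_ker_pow_eq T h1 hF hT (show ℓ - j ≤ ℓ by omega)]
  omega

end aux



/-- With `ℓ = q^a`, `m = q^b − 1 > 1`, `t = ℓ mod m`, let `σ(x) = ∑_{i=0}^{m} x^{q^i}` on
`F_{q^ℓ}` and let `W` be the kernel in `F_{q^{m+1}} = {x : x^{q^{m+1}} = x}` of the trace
to `F_q`. Then (i) `W` is an `F_q`-subspace of dimension `m` with `∏_{w ∈ W\{0}} w = 1`;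
(ii) `F_{q^t} ⊆ W`, the image of the `⌈(ℓ−m)/m⌉`-fold iterate of `σ` equals
`F_{q^t} = {x : x^{q^t} = x}`, and `im(σ^{∘⌈(ℓ−m)/m⌉}) ∩ W` has `F_q`-dimension at least
`t`; (iii) `W` is contained in the image of the `⌊(ℓ−m)/m⌋`-fold iterate of `σ`. -/
theorem statement17 {K F : Type*} [Field K] [Field F] [Fintype K] [Fintype F] [Algebra K F]
    (q a b ℓ m t : ℕ) (hq : Fintype.card K = q) (hab : b ≤ a) (hb : 1 ≤ b)
    (hℓ : ℓ = q ^ a) (hm : m = q ^ b - 1) (hm1 : 1 < m) (ht : t = ℓ % m)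
    (hdim : Module.finrank K F = ℓ)
    (σ : F → F) (hσ : ∀ x : F, σ x = ∑ i ∈ Finset.range (m + 1), x ^ q ^ i) :
    (∃ Wsub : Submodule K F,
        (Wsub : Set F) = {x : F | x ^ q ^ (m + 1) = x ∧ σ x = 0} ∧
        Module.finrank K Wsub = m) ∧
    (∏ w ∈ Finset.univ.filter
        (fun w : F => (w ^ q ^ (m + 1) = w ∧ σ w = 0) ∧ w ≠ 0), w) = 1 ∧
    {x : F | x ^ q ^ t = x} ⊆ {x : F | x ^ q ^ (m + 1) = x ∧ σ x = 0} ∧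
    Set.range (σ^[(ℓ - m + m - 1) / m]) = {x : F | x ^ q ^ t = x} ∧
    t ≤ Module.finrank K (Submodule.span K
        (Set.range (σ^[(ℓ - m + m - 1) / m]) ∩
          {x : F | x ^ q ^ (m + 1) = x ∧ σ x = 0})) ∧
    {x : F | x ^ q ^ (m + 1) = x ∧ σ x = 0} ⊆ Set.range (σ^[(ℓ - m) / m]) := by
  haveI : FiniteDimensional K F := Module.Finite.of_finite
  set p := ringChar K with hp
  haveI hcharK : CharP K p := ringChar.charP K
  have hpp : p.Prime := CharP.char_is_prime K p
  haveI : Fact p.Prime := ⟨hpp⟩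
  haveI hcharF : CharP F p := charP_of_injective_algebraMap (algebraMap K F).injective p
  obtain ⟨e, hpe, hqe⟩ := FiniteField.card K p
  rw [hq] at hqe
  have hq2 : 2 ≤ q := by
    calc 2 ≤ p := hpp.two_le
    _ ≤ p ^ (e : ℕ) := Nat.le_self_pow (by positivity) p
    _ = q := hqe.symm
  have hcardF : Fintype.card F = q ^ ℓ := by
    rw [card_eq_pow_finrank (K := K) (V := F), hq, hdim]
  -- arithmetic
  have hqb1 : 1 ≤ q ^ b := Nat.one_le_pow _ _ (by omega)
  have hm1' : m + 1 = q ^ b := by omega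
  have hmlℓ : m + 1 ≤ ℓ := by
    rw [hm1', hℓ]; exact Nat.pow_le_pow_right (by omega) hab
  have htq : t = q ^ (a % b) := by
    have hmod : q ^ b ≡ 1 [MOD m] := by
      exact ((Nat.modEq_iff_dvd' (by omega)).mpr (by rw [hm])).symm
    have h1 : q ^ a ≡ q ^ (a % b) [MOD m] := by
      conv_lhs => rw [show a = b * (a / b) + a % b from by
        have := Nat.div_add_mod a b; omega]
      rw [pow_add, pow_mul]
      calc (q ^ b) ^ (a / b) * q ^ (a % b)
          ≡ 1 ^ (a / b) * q ^ (a % b) [MOD m] := (hmod.pow _).mul_right _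
        _ = q ^ (a % b) := by ring
    have hlt : q ^ (a % b) < m := by
      rcases Nat.lt_or_ge b 2 with hb2 | hb2
      · have : b = 1 := by omega
        simp [this, Nat.mod_one]
        omega
      · have hab2 : a % b ≤ b - 1 := by
          have := Nat.mod_lt a (show 0 < b by omega); omega
        calc q ^ (a % b) ≤ q ^ (b - 1) := Nat.pow_le_pow_right (by omega) hab2
          _ < m := by
            have h2 : q ^ b = q ^ (b - 1) * q := by
              rw [← pow_succ]; congr 1; omega
            have h3 : 2 ≤ q ^ (b - 1) := by
              calc 2 ≤ q := hq2
              _ ≤ q ^ (b - 1) := Nat.le_self_pow (by omega) q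
            nlinarith
    rw [ht, hℓ, h1, Nat.mod_eq_of_lt hlt]
  have htpos : 1 ≤ t := by rw [htq]; exact Nat.one_le_pow _ _ (by omega)
  have htltm : t < m := by
    rw [ht]; rw [ht] at htpos
    have := Nat.mod_lt ℓ (show 0 < m by omega); omega
  have hmpos : 0 < m := by omega
  set d := ℓ / m with hdd
  have hd : m * d + t = ℓ := by rw [ht, hdd]; exact Nat.div_add_mod ℓ m
  have hd1 : 1 ≤ d := (Nat.one_le_div_iff hmpos).mpr (by omega)
  have hmd : m * d = m * (d - 1) + m := by
    have h0 : d - 1 + 1 = d := by omega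
    calc m * d = m * (d - 1 + 1) := by rw [h0]
    _ = m * (d - 1) + m := by rw [Nat.mul_add, mul_one]
  have hk1 : (ℓ - m + m - 1) / m = d := by
    have h1 : ℓ - m + m - 1 = m * d + (t - 1) := by omega
    rw [h1, Nat.mul_add_div hmpos, Nat.div_eq_of_lt (by omega)]
    omega
  have hk0 : (ℓ - m) / m = d - 1 := by
    have h1 : ℓ - m = m * (d - 1) + t := by omega
    rw [h1, Nat.mul_add_div hmpos, Nat.div_eq_of_lt (by omega)]
    omega
  have hsub1 : ℓ - m * d = t := by omega
  have hsub0 : ℓ - m * (d - 1) = m + t := by omega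
  have hmdle : m * d ≤ ℓ := by omega
  have hmd1le : m * (d - 1) ≤ ℓ := by omega
  -- the Frobenius K-linear map
  set Φ : F →ₗ[K] F :=
    { toFun := fun x => x ^ q
      map_add' := fun x y => by
        simp only [hqe]
        exact add_pow_char_pow x y p (↑e : ℕ)
      map_smul' := fun c x => by
        simp only [RingHom.id_apply, Algebra.smul_def, mul_pow]
        congr 1
        rw [← map_pow, ← hq, FiniteField.pow_card] } with hΦ
  have hΦa : ∀ x : F, Φ x = x ^ q := fun _ => rfl
  have hΦpow : ∀ (i : ℕ) (x : F), (Φ ^ i) x = x ^ q ^ i := by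
    intro i
    induction i with
    | zero => intro x; simp
    | succ n ih =>
      intro x
      rw [pow_succ, Module.End.mul_apply, ih, hΦa, ← pow_mul, ← pow_succ']
  -- key polynomial identity
  have key : ∀ k : ℕ, ((Φ - 1) ^ (p ^ k - 1) = ∑ i ∈ Finset.range (p ^ k), Φ ^ i)
      ∧ (Φ - 1) ^ p ^ k = Φ ^ p ^ k - 1 := by
    intro k
    have hpk1 : 1 ≤ p ^ k := Nat.one_le_pow _ _ hpp.pos
    have hX : ((X : K[X]) - 1) ^ p ^ k = X ^ p ^ k - 1 := by
      simpa using sub_pow_char_pow (R := K[X]) (x := X) (y := 1) (n := k)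
    have hX2 : ((X : K[X]) - 1) ^ (p ^ k - 1) = ∑ i ∈ Finset.range (p ^ k), X ^ i := by
      have hne : (X : K[X]) - 1 ≠ 0 := by
        have := Polynomial.X_sub_C_ne_zero (1 : K)
        simpa using this
      apply mul_left_cancel₀ hne
      rw [← pow_succ', Nat.sub_add_cancel hpk1, hX, mul_geom_sum]
    constructor
    · have := congrArg (aeval Φ) hX2
      simpa [map_pow, map_sub, map_sum, Polynomial.aeval_X, Polynomial.aeval_one] using this
    · have := congrArg (aeval Φ) hX
      simpa [map_pow, map_sub, Polynomial.aeval_X, Polynomial.aeval_one] using this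
  have hebm : m + 1 = p ^ (e * b) := by rw [hm1', hqe, ← pow_mul]
  have hℓp : ℓ = p ^ (e * a) := by rw [hℓ, hqe, ← pow_mul]
  have htp : t = p ^ (e * (a % b)) := by rw [htq, hqe, ← pow_mul]
  set T : F →ₗ[K] F := Φ - 1 with hT
  have hσT : ∀ x : F, σ x = (T ^ m) x := by
    intro x
    have h1 := (key (e * b)).1
    rw [← hebm, Nat.add_sub_cancel] at h1
    rw [hσ, hT, h1, LinearMap.sum_apply]
    exact (Finset.sum_congr rfl fun i _ => (hΦpow i x)).symm
  have hTt : T ^ t = Φ ^ t - 1 := by rw [hT, htp]; exact (key _).2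
  have hTm1 : T ^ (m + 1) = Φ ^ (m + 1) - 1 := by rw [hT, hebm]; exact (key _).2
  have hTℓ : T ^ ℓ = 0 := by
    have h0 : T ^ ℓ = Φ ^ ℓ - 1 := by rw [hT, hℓp]; exact (key _).2
    rw [h0]
    ext x
    simp only [LinearMap.sub_apply, Module.End.one_apply, LinearMap.zero_apply, hΦpow,
      sub_eq_zero]
    rw [← hcardF, FiniteField.pow_card]
  -- kernel of T has dimension ≤ 1
  have hker1 : finrank K (LinearMap.ker T) ≤ 1 := by
    have hP : ((X : F[X]) ^ q - X) ≠ 0 := by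
      intro h
      have h2 : ((X : F[X]) ^ q - X).coeff q = 1 := by
        rw [coeff_sub, coeff_X_pow, if_pos rfl, coeff_X, if_neg (by omega), sub_zero]
      rw [h] at h2
      simp at h2
    have hsub : (LinearMap.ker T : Set F) ⊆ ↑(((X : F[X]) ^ q - X).roots.toFinset) := by
      intro x hx
      simp only [SetLike.mem_coe, LinearMap.mem_ker, hT, LinearMap.sub_apply,
        Module.End.one_apply, hΦa, sub_eq_zero] at hx
      simp only [Finset.coe_sort_coe, Finset.mem_coe, Multiset.mem_toFinset,
        mem_roots hP, IsRoot.def, eval_sub, eval_pow, eval_X]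
      rw [hx, sub_self]
    have hc1 : Fintype.card (LinearMap.ker T) ≤ q := by
      calc Fintype.card (LinearMap.ker T)
          = (LinearMap.ker T : Set F).toFinset.card := (Set.toFinset_card _).symm
        _ ≤ ((X : F[X]) ^ q - X).roots.toFinset.card := by
            apply Finset.card_le_card
            rw [Set.toFinset_subset]
            exact hsub
        _ ≤ Multiset.card ((X : F[X]) ^ q - X).roots := Multiset.toFinset_card_le _
        _ ≤ ((X : F[X]) ^ q - X).natDegree := Polynomial.card_roots' _
        _ ≤ q := by
            refine le_trans (Polynomial.natDegree_sub_le _ _) ?_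
            simp [Polynomial.natDegree_X_pow]
            omega
    have hc2 : Fintype.card (LinearMap.ker T) = q ^ finrank K (LinearMap.ker T) := by
      rw [card_eq_pow_finrank (K := K), hq]
    by_contra hcon
    have h3 : 2 ≤ finrank K (LinearMap.ker T) := by omega
    have h4 : q ^ 2 ≤ q ^ finrank K (LinearMap.ker T) := Nat.pow_le_pow_right (by omega) h3
    have h5 : q ^ 2 ≤ q := le_trans h4 (le_trans (le_of_eq hc2.symm) hc1)
    have h6 : q ^ 1 < q ^ 2 := Nat.pow_lt_pow_right (by omega) (by omega)
    rw [pow_one] at h6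
    omega
  -- the subspace facts
  have hkerj : ∀ j, j ≤ ℓ → finrank K (LinearMap.ker (T ^ j)) = j :=
    fun j hj => aux_ker_pow_eq T hker1 hdim hTℓ hj
  have hrangej : ∀ j, j ≤ ℓ → LinearMap.range (T ^ j) = LinearMap.ker (T ^ (ℓ - j)) :=
    fun j hj => aux_range_pow_eq T hker1 hdim hTℓ hj
  have hEt : ∀ x : F, x ∈ LinearMap.ker (T ^ t) ↔ x ^ q ^ t = x := by
    intro x
    rw [LinearMap.mem_ker, hTt, LinearMap.sub_apply, Module.End.one_apply, sub_eq_zero,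
      hΦpow]
  have hWmem : ∀ x : F, x ∈ LinearMap.ker (T ^ m) ↔ (x ^ q ^ (m + 1) = x ∧ σ x = 0) := by
    intro x
    constructor
    · intro hx
      have h1 : x ∈ LinearMap.ker (T ^ (m + 1)) := aux_ker_mono T (by omega) hx
      rw [LinearMap.mem_ker, hTm1, LinearMap.sub_apply, Module.End.one_apply, sub_eq_zero,
        hΦpow] at h1
      exact ⟨h1, by rw [hσT]; exact hx⟩
    · intro ⟨h1, h2⟩
      rw [LinearMap.mem_ker, ← hσT]
      exact h2
  have hWset : (LinearMap.ker (T ^ m) : Set F) = {x : F | x ^ q ^ (m + 1) = x ∧ σ x = 0} := by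
    ext x
    simp only [SetLike.mem_coe, Set.mem_setOf_eq]
    exact hWmem x
  have hEtset : (LinearMap.ker (T ^ t) : Set F) = {x : F | x ^ q ^ t = x} := by
    ext x
    simp only [SetLike.mem_coe, Set.mem_setOf_eq]
    exact hEt x
  -- iterates of σ
  have hiter : ∀ k : ℕ, σ^[k] = ⇑(T ^ (m * k)) := by
    intro k
    have hσfun : σ = ⇑(T ^ m) := funext hσT
    rw [hσfun, ← Module.End.coe_pow, ← pow_mul]
  have hrange1 : Set.range (σ^[(ℓ - m + m - 1) / m]) = {x : F | x ^ q ^ t = x} := by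
    rw [hk1, hiter d, ← LinearMap.coe_range, hrangej (m * d) hmdle, hsub1, hEtset]
  have hrange0 : Set.range (σ^[(ℓ - m) / m]) = (LinearMap.ker (T ^ (m + t)) : Set F) := by
    rw [hk0, hiter (d - 1), ← LinearMap.coe_range, hrangej (m * (d - 1)) hmd1le, hsub0]
  have htm : t ≤ m := by omega
  refine ⟨⟨LinearMap.ker (T ^ m), hWset, hkerj m (by omega)⟩, ?_, ?_, hrange1, ?_, ?_⟩
  · -- product over W minus 0
    classical
    set s : Finset F := Finset.univ.filter
        (fun w : F => (w ^ q ^ (m + 1) = w ∧ σ w = 0) ∧ w ≠ 0) with hs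
    show ∏ w ∈ s, w = 1
    have hsmem : ∀ w : F, w ∈ s ↔ (w ∈ LinearMap.ker (T ^ m) ∧ w ≠ 0) := by
      intro w
      rw [hs]
      simp only [Finset.mem_filter, Finset.mem_univ, true_and, hWmem]
    have hqi : ∀ i : ℕ, 1 ≤ q ^ i := fun i => Nat.one_le_pow _ _ (by omega)
    have hcardW : Fintype.card (LinearMap.ker (T ^ m)) = q ^ m := by
      rw [card_eq_pow_finrank (K := K), hq, hkerj m (by omega)]
    have hWfin : s = (LinearMap.ker (T ^ m) : Set F).toFinset.erase 0 := by
      ext w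
      simp only [Finset.mem_erase, Set.mem_toFinset, SetLike.mem_coe, hsmem, and_comm]
    have hscard : s.card = q ^ m - 1 := by
      rw [hWfin, Finset.card_erase_of_mem (by rw [Set.mem_toFinset]; exact zero_mem _),
        Set.toFinset_card]
      have h11 : Fintype.card ((LinearMap.ker (T ^ m) : Set F) : Type _) = q ^ m :=
        (Fintype.card_congr (Equiv.refl _)).trans hcardW
      rw [h11]
    set S : F[X] := ∑ i ∈ Finset.range (m + 1), X ^ (q ^ i - 1) with hS
    have hSsplit : S = X ^ (q ^ m - 1) + ∑ i ∈ Finset.range m, (X : F[X]) ^ (q ^ i - 1) := by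
      rw [hS, Finset.sum_range_succ, add_comm]
    have hdegR : (∑ i ∈ Finset.range m, (X : F[X]) ^ (q ^ i - 1)).degree
        < ((q ^ m - 1 : ℕ) : WithBot ℕ) := by
      refine lt_of_le_of_lt (Polynomial.degree_sum_le _ _) ?_
      rw [Finset.sup_lt_iff (WithBot.bot_lt_coe _)]
      intro i hi
      rw [Polynomial.degree_X_pow]
      have h7 : q ^ i < q ^ m := Nat.pow_lt_pow_right (by omega) (Finset.mem_range.mp hi)
      have h7' : 1 ≤ q ^ i := Nat.one_le_pow _ _ (by omega)
      exact_mod_cast (by omega : (q ^ i - 1) < (q ^ m - 1))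
    have hSmonic : S.Monic := by
      rw [hSsplit]
      exact Polynomial.monic_X_pow_add hdegR
    have hSne : S ≠ 0 := hSmonic.ne_zero
    have hdegS : S.degree = ((q ^ m - 1 : ℕ) : WithBot ℕ) := by
      rw [hSsplit, Polynomial.degree_add_eq_left_of_degree_lt, Polynomial.degree_X_pow]
      rw [Polynomial.degree_X_pow]
      exact hdegR
    have hSnat : S.natDegree = q ^ m - 1 := Polynomial.natDegree_eq_of_degree_eq_some hdegS
    have hroot : ∀ w ∈ s, S.eval w = 0 := by
      intro w hw
      obtain ⟨hwk, hw0⟩ := (hsmem w).mp hw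
      have hσw : σ w = 0 := ((hWmem w).mp hwk).2
      have hmul : w * S.eval w = 0 := by
        rw [hS, Polynomial.eval_finset_sum, Finset.mul_sum]
        rw [← hσw, hσ]
        refine Finset.sum_congr rfl fun i _ => ?_
        rw [Polynomial.eval_pow, Polynomial.eval_X, ← pow_succ', Nat.sub_add_cancel (hqi i)]
      exact (mul_eq_zero.mp hmul).resolve_left hw0
    have hle : s.val ≤ S.roots := by
      rw [Multiset.le_iff_count]
      intro w
      by_cases hw : w ∈ s
      · have h1 : Multiset.count w s.val = 1 := Multiset.count_eq_one_of_mem s.nodup (Finset.mem_def.mp hw)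
        rw [h1, Polynomial.count_roots]
        exact (Polynomial.rootMultiplicity_pos hSne).mpr (hroot w hw)
      · rw [Multiset.count_eq_zero_of_notMem (by exact hw)]
        exact Nat.zero_le _
    have hdvd : (Multiset.map (fun w => X - C w) s.val).prod ∣ S :=
      (Multiset.prod_X_sub_C_dvd_iff_le_roots hSne _).mpr hle
    have hP0eq : (∏ w ∈ s, (X - C w)) = (Multiset.map (fun w => X - C w) s.val).prod := rfl
    have hP0monic : (∏ w ∈ s, (X - C w)).Monic :=
      Polynomial.monic_prod_of_monic _ _ fun w _ => Polynomial.monic_X_sub_C w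
    have hP0deg : (∏ w ∈ s, (X - C w)).natDegree = q ^ m - 1 := by
      rw [Polynomial.natDegree_prod_of_monic _ _ fun w _ => Polynomial.monic_X_sub_C w]
      simp [Polynomial.natDegree_X_sub_C, hscard]
    have hPS : (∏ w ∈ s, (X - C w)) = S := by
      obtain ⟨c, hc⟩ := hdvd
      rw [← hP0eq] at hc
      have hc0 : c ≠ 0 := by
        rintro rfl
        rw [mul_zero] at hc
        exact hSne hc
      have hcdeg : c.natDegree = 0 := by
        have h8 := Polynomial.natDegree_mul hP0monic.ne_zero hc0
        rw [← hc, hSnat, hP0deg] at h8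
        omega
      have hclead : c = 1 := by
        have h9 : S.leadingCoeff = (∏ w ∈ s, (X - C w)).leadingCoeff * c.leadingCoeff := by
          rw [hc, Polynomial.leadingCoeff_mul]
        rw [hSmonic.leadingCoeff, hP0monic.leadingCoeff, one_mul] at h9
        have hc' := Polynomial.eq_C_of_natDegree_eq_zero hcdeg
        have h10 : c.leadingCoeff = c.coeff 0 := by
          conv_lhs => rw [hc']
          rw [Polynomial.leadingCoeff_C]
        rw [hc', ← h10, ← h9, map_one]
      rw [hc, hclead, mul_one]
    have hev1 : S.eval 0 = 1 := by
      rw [hS, Polynomial.eval_finset_sum]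
      rw [Finset.sum_eq_single_of_mem 0 (Finset.mem_range.mpr (by omega))]
      · simp
      · intro i hi hi0
        rw [Polynomial.eval_pow, Polynomial.eval_X]
        refine zero_pow ?_
        have h10 : 2 ≤ q ^ i := by
          calc 2 ≤ q := hq2
          _ = q ^ 1 := (pow_one q).symm
          _ ≤ q ^ i := Nat.pow_le_pow_right (by omega) (by omega)
        omega
    have hev2 : S.eval 0 = (-1 : F) ^ s.card * ∏ w ∈ s, w := by
      rw [← hPS, Polynomial.eval_prod]
      simp only [Polynomial.eval_sub, Polynomial.eval_X, Polynomial.eval_C, zero_sub]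
      rw [show (fun w : F => -w) = (fun w : F => (-1) * w) from funext fun w => by ring]
      rw [Finset.prod_mul_distrib, Finset.prod_const]
    have hneg1 : ((-1 : F)) ^ s.card = 1 := by
      rcases eq_or_ne p 2 with hp2 | hp2
      · haveI : CharP F 2 := by rw [← hp2]; exact hcharF
        have hneg : (-1 : F) = 1 := by
          have := CharTwo.neg_eq (1 : F)
          simpa using this
        rw [hneg, one_pow]
      · have hqodd : Odd q := by
          rw [hqe]
          exact (hpp.odd_of_ne_two hp2).pow
        have heven : Even (q ^ m - 1) := Nat.Odd.sub_odd hqodd.pow odd_one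
        rw [hscard]
        exact heven.neg_one_pow
    rw [hev2, hneg1, one_mul] at hev1
    exact hev1
  · -- E_t ⊆ W
    rw [← hWset, ← hEtset]
    exact fun x hx => aux_ker_mono T htm hx
  · -- finrank of span
    have hinter : Set.range (σ^[(ℓ - m + m - 1) / m]) ∩
        {x : F | x ^ q ^ (m + 1) = x ∧ σ x = 0} = (LinearMap.ker (T ^ t) : Set F) := by
      rw [hrange1, ← hWset, ← hEtset]
      apply Set.inter_eq_left.mpr
      exact fun x hx => aux_ker_mono T htm hx
    rw [hinter, Submodule.span_eq, hkerj t (by omega)]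
  · -- W ⊆ range of floor iterate
    rw [hrange0, ← hWset]
    exact fun x hx => aux_ker_mono T (by omega) hx
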